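/- Suppose Assumption (G_m) holds for some integer m ≥ 3 and that each S_n has a finite absolute moment of order m+1. Then for every real 1 ≤ p ≤ m there is a constant C_p, independent of n, such that ‖S_n‖_{L^p} ≤ C_p σ_n for all n. -/

import Mathlib

open MeasureTheory ProbabilityTheory Filter Set
open scoped ENNReal NNReal

lemma iterWithin_open {f : ℝ → ℂ} {s : Set ℝ} (hs : IsOpen s) {x : ℝ} (hx : x ∈ s)
    (n : ℕ) : iteratedDerivWithin n f s x = iteratedDeriv n f x := by
  rw [iteratedDerivWithin_eq_iteratedFDerivWithin, iteratedDeriv_eq_iteratedFDeriv,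
    iteratedFDerivWithin_of_isOpen n hs hx]

lemma iterWithin_nhds {f : ℝ → ℂ} {s : Set ℝ} {x : ℝ} (hx : s ∈ nhds x)
    (n : ℕ) : iteratedDerivWithin n f s x = iteratedDeriv n f x := by
  rw [iteratedDerivWithin_eq_iteratedFDerivWithin, iteratedDeriv_eq_iteratedFDeriv,
    ← iteratedFDerivWithin_univ,
    iteratedFDerivWithin_congr_set (Filter.eventuallyEq_set.2 ?_) n]
  filter_upwards [hx] with y hy
  simp [hy]

lemma hasDerivAt_iteratedDeriv_of_contDiffOn {g : ℝ → ℂ} {U : Set ℝ} (hU : IsOpen U)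
    {K : ℕ} (hg : ContDiffOn ℝ (K : ℕ) g U) {j : ℕ} (hj : j < K) {t : ℝ} (ht : t ∈ U) :
    HasDerivAt (iteratedDeriv j g) (iteratedDeriv (j + 1) g t) t := by
  have h1 : DifferentiableOn ℝ (iteratedDerivWithin j g U) U :=
    hg.differentiableOn_iteratedDerivWithin (by exact_mod_cast hj) hU.uniqueDiffOn
  have h2 : DifferentiableAt ℝ (iteratedDeriv j g) t := by
    have := (h1 t ht).differentiableAt (hU.mem_nhds ht)
    apply this.congr_of_eventuallyEq
    filter_upwards [hU.mem_nhds ht] with y hy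
    exact (iterWithin_open hU hy j).symm
  rw [iteratedDeriv_succ]
  exact h2.hasDerivAt

lemma charDeriv {Ω : Type*} [MeasurableSpace Ω] {μ : Measure Ω} [IsProbabilityMeasure μ]
    {X : Ω → ℝ} (hX : AEMeasurable X μ) {K : ℕ}
    (hint : ∀ k ≤ K, Integrable (fun ω => |X ω| ^ k) μ) :
    ∀ k ≤ K, iteratedDeriv k (fun t : ℝ => ∫ ω, Complex.exp (Complex.I * t * X ω) ∂μ)
      = fun t : ℝ => ∫ ω, (Complex.I * X ω) ^ k * Complex.exp (Complex.I * t * X ω) ∂μ := by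
  have hXc : AEMeasurable (fun ω => (X ω : ℂ)) μ :=
    Complex.measurable_ofReal.comp_aemeasurable hX
  have hmeas : ∀ (k : ℕ) (t : ℝ),
      AEStronglyMeasurable (fun ω => (Complex.I * X ω) ^ k * Complex.exp (Complex.I * t * X ω)) μ := by
    intro k t
    have := (((hXc.const_mul Complex.I).pow_const k).mul
      (Complex.measurable_exp.comp_aemeasurable
        ((hXc.const_mul Complex.I).const_mul t))).aestronglyMeasurable
    apply this.congr
    filter_upwards with ω
    simp only [Pi.mul_apply, Function.comp_apply]
    ring_nf
  have hnorm : ∀ (k : ℕ) (t : ℝ) (ω : Ω),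
      ‖(Complex.I * X ω) ^ k * Complex.exp (Complex.I * t * X ω)‖ = |X ω| ^ k := by
    intro k t ω
    rw [norm_mul, norm_pow, norm_mul, Complex.norm_exp]
    have : (Complex.I * t * X ω).re = 0 := by simp
    simp [this]
  have hInt : ∀ k ≤ K, ∀ t : ℝ,
      Integrable (fun ω => (Complex.I * X ω) ^ k * Complex.exp (Complex.I * t * X ω)) μ := by
    intro k hk t
    refine (hint k hk).mono' (hmeas k t) ?_
    filter_upwards with ω
    rw [hnorm k t ω]
  have hHD : ∀ k, k + 1 ≤ K → ∀ t₀ : ℝ,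
      HasDerivAt (fun t : ℝ => ∫ ω, (Complex.I * X ω) ^ k * Complex.exp (Complex.I * t * X ω) ∂μ)
        (∫ ω, (Complex.I * X ω) ^ (k + 1) * Complex.exp (Complex.I * t₀ * X ω) ∂μ) t₀ := by
    intro k hk t₀
    have := hasDerivAt_integral_of_dominated_loc_of_deriv_le (μ := μ)
      (F := fun (t : ℝ) (ω : Ω) => (Complex.I * X ω) ^ k * Complex.exp (Complex.I * t * X ω))
      (F' := fun (t : ℝ) (ω : Ω) => (Complex.I * X ω) ^ (k + 1) * Complex.exp (Complex.I * t * X ω))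
      (x₀ := t₀) (bound := fun ω => |X ω| ^ (k + 1)) (Metric.ball_mem_nhds t₀ one_pos)
      (Filter.Eventually.of_forall (fun t => hmeas k t))
      (hInt k (le_trans (Nat.le_succ k) hk) t₀)
      (hmeas (k + 1) t₀) ?_ (hint (k + 1) hk) ?_
    · exact this.2
    · filter_upwards with ω
      intro x hx
      rw [hnorm]
    · filter_upwards with ω
      intro x hx
      have h1 : HasDerivAt (fun t : ℝ => Complex.I * t * X ω) (Complex.I * X ω) x := by
        have h0 : HasDerivAt (fun t : ℝ => (t : ℂ)) 1 x := by
          simpa using (hasDerivAt_id x).ofReal_comp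
        have := (h0.const_mul Complex.I).mul_const ((X ω : ℂ))
        simpa [mul_assoc, mul_comm, mul_left_comm] using this
      have h2 := (h1.cexp).const_mul ((Complex.I * X ω) ^ k)
      convert h2 using 1
      · rfl
      ring
  intro k hk
  induction k with
  | zero => funext t; simp
  | succ k IH =>
    have hk' : k ≤ K := le_trans (Nat.le_succ k) hk
    rw [iteratedDeriv_succ, IH hk']
    funext t
    exact (hHD k hk t).deriv

lemma chain_bound {F g : ℕ → ℝ → ℂ} {P : ℕ → Prop} {s : Set ℝ} (hsu : UniqueDiffOn ℝ s)
    {q : ℕ} {D : ℝ} (hD : 0 ≤ D)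
    (hFs : ∀ i, P i → ContDiffOn ℝ ((q - 1 : ℕ) : ℕ∞) (F i) s)
    (hgs : ∀ i, P i → ContDiffOn ℝ ((q - 1 : ℕ) : ℕ∞) (g i) s)
    (hFd : ∀ i, P i → ∀ t ∈ s, derivWithin (F i) s t = g i t * F i t)
    (hF0 : ∀ i, P i → ∀ t ∈ s, ‖F i t‖ ≤ 1)
    (hgb : ∀ i, P i → ∀ k < q, ∀ t ∈ s, ‖iteratedDerivWithin k (g i) s t‖ ≤ D) :
    ∀ k ≤ q, ∃ M : ℝ, 0 ≤ M ∧ ∀ j ≤ k, ∀ i, P i → ∀ t ∈ s,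
      ‖iteratedDerivWithin j (F i) s t‖ ≤ M := by
  intro k hk
  induction k with
  | zero =>
    refine ⟨1, zero_le_one, ?_⟩
    intro j hj i hi t ht
    interval_cases j
    simpa using hF0 i hi t ht
  | succ k IH =>
    obtain ⟨M, hM0, hM⟩ := IH (le_trans (Nat.le_succ k) hk)
    refine ⟨max M (2 ^ k * (D * M)), le_max_of_le_left hM0, ?_⟩
    intro j hj i hi t ht
    rcases Nat.lt_or_ge j (k + 1) with hj' | hj'
    · exact le_trans (hM j (Nat.lt_succ_iff.mp hj') i hi t ht) (le_max_left _ _)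
    have hjk : j = k + 1 := le_antisymm hj hj'
    subst hjk
    have hkq : k ≤ q - 1 := by omega
    have e1 : iteratedDerivWithin (k + 1) (F i) s t
        = iteratedDerivWithin k (fun u => g i u * F i u) s t := by
      rw [iteratedDerivWithin_succ']
      exact iteratedDerivWithin_congr (fun u hu => hFd i hi u hu) ht
    rw [e1, ← norm_iteratedFDerivWithin_eq_norm_iteratedDerivWithin]
    have hmul := norm_iteratedFDerivWithin_mul_le (𝕜 := ℝ)
      (hgs i hi) (hFs i hi) hsu ht (n := k) (by exact_mod_cast hkq)
    refine le_trans hmul (le_trans ?_ (le_max_right _ _))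
    have hsum : ∀ l ∈ Finset.range (k + 1),
        (k.choose l : ℝ) * ‖iteratedFDerivWithin ℝ l (g i) s t‖ *
          ‖iteratedFDerivWithin ℝ (k - l) (F i) s t‖ ≤ (k.choose l : ℝ) * (D * M) := by
      intro l hl
      have hl' : l ≤ k := Nat.lt_succ_iff.mp (Finset.mem_range.mp hl)
      rw [mul_assoc]
      refine mul_le_mul_of_nonneg_left ?_ (by positivity)
      refine mul_le_mul ?_ ?_ (norm_nonneg _) hD
      · rw [norm_iteratedFDerivWithin_eq_norm_iteratedDerivWithin]
        exact hgb i hi l (by omega) t ht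
      · rw [norm_iteratedFDerivWithin_eq_norm_iteratedDerivWithin]
        exact hM (k - l) (by omega) i hi t ht
    refine le_trans (Finset.sum_le_sum hsum) ?_
    rw [← Finset.sum_mul]
    refine mul_le_mul_of_nonneg_right ?_ (by positivity)
    have := Nat.sum_range_choose k
    have h2 : (∑ l ∈ Finset.range (k + 1), (k.choose l : ℝ)) = 2 ^ k := by
      exact_mod_cast congrArg (Nat.cast : ℕ → ℝ) this
    rw [h2]

/-- Under Assumption (G_m) and finiteness of absolute moments of order `m+1`,
for every `1 ≤ p ≤ m` there is a constant `C_p` independent of `n` with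
`‖S n‖_{L^p} ≤ C_p σ n` for all `n`. -/
theorem stmt8
    {Ω : Type*} [MeasurableSpace Ω] (μ : Measure Ω) [IsProbabilityMeasure μ]
    (S : ℕ → Ω → ℝ) (σ : ℕ → ℝ)
    (hSmeas : ∀ n, AEMeasurable (S n) μ)
    (hS2 : ∀ n, MemLp (S n) 2 μ)
    (hmean : ∀ n, ∫ ω, S n ω ∂μ = 0)
    (hσdef : ∀ n, σ n = (eLpNorm (S n) 2 μ).toReal)
    (hσtop : Tendsto σ atTop atTop)
    (m : ℕ) (hm : 3 ≤ m)
    (hSm : ∀ n, MemLp (S n) (m + 1 : ℕ) μ)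
    (f : ℕ → ℝ → ℂ)
    (hf : ∀ n, ∀ t : ℝ, f n t = ∫ ω, Complex.exp (Complex.I * t * (S n ω / σ n)) ∂μ)
    -- Assumption (G_m)
    (ε₀ : ℝ) (hε₀ : 0 < ε₀)
    (hnv : ∀ n, ∀ t : ℝ, |t| ≤ ε₀ * σ n → f n t ≠ 0)
    (Λ : ℕ → ℝ → ℂ)
    (hΛdiff : ∀ n, ContDiffOn ℝ (m + 1 : ℕ) (Λ n) (Set.Icc (-(ε₀ * σ n)) (ε₀ * σ n)))
    (hΛ0 : ∀ n, Λ n 0 = 0)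
    (hΛf : ∀ n, ∀ t : ℝ, |t| ≤ ε₀ * σ n → f n t = Complex.exp (Λ n t - (t : ℂ) ^ 2 / 2))
    (hΛder : ∀ j : ℕ, 3 ≤ j → j ≤ m + 1 → ∃ Cj : ℝ, 0 < Cj ∧ ∃ εj : ℝ, 0 < εj ∧ εj ≤ ε₀ ∧
      ∀ n, ∀ t : ℝ, |t| ≤ εj * σ n →
        ‖iteratedDerivWithin j (Λ n) (Set.Icc (-(ε₀ * σ n)) (ε₀ * σ n)) t‖ ≤ Cj / σ n ^ (j - 2)) :
    ∀ p : ℝ, 1 ≤ p → p ≤ m →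
      ∃ Cp : ℝ, ∀ n, (eLpNorm (S n) (ENNReal.ofReal p) μ).toReal ≤ Cp * σ n := by
  classical
  intro p hp1 hpm
  -- the even exponent q
  set q : ℕ := if Even m then m else m + 1 with hqdef
  have hq_even : Even q := by
    by_cases h : Even m
    · simp [hqdef, h]
    · simp only [hqdef, if_neg h]
      exact Nat.even_add_one.mpr h
  have hmq : m ≤ q := by by_cases h : Even m <;> simp [hqdef, h]
  have hqm1 : q ≤ m + 1 := by by_cases h : Even m <;> simp [hqdef, h]
  have hq3 : 3 ≤ q := le_trans hm hmq
  -- uniform constants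
  have hΛder' : ∀ j : ℕ, ∃ CE : ℝ × ℝ, 0 < CE.1 ∧ 0 < CE.2 ∧ CE.2 ≤ ε₀ ∧
      (3 ≤ j → j ≤ m + 1 → ∀ n, ∀ t : ℝ, |t| ≤ CE.2 * σ n →
        ‖iteratedDerivWithin j (Λ n) (Set.Icc (-(ε₀ * σ n)) (ε₀ * σ n)) t‖
          ≤ CE.1 / σ n ^ (j - 2)) := by
    intro j
    by_cases h : 3 ≤ j ∧ j ≤ m + 1
    · obtain ⟨Cj, hCj, εj, hεj, hεj', hb⟩ := hΛder j h.1 h.2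
      exact ⟨(Cj, εj), hCj, hεj, hεj', fun _ _ => hb⟩
    · refine ⟨(1, ε₀), one_pos, hε₀, le_refl _, fun h1 h2 => absurd ⟨h1, h2⟩ h⟩
  choose CE hCE1 hCE2 hCE3 hCE4 using hΛder'
  set Cm : ℝ := ∑ j ∈ Finset.range (m + 2), (CE j).1 with hCmdef
  have hCm0 : 0 < Cm := Finset.sum_pos (fun j _ => hCE1 j) ⟨0, by simp⟩
  have hCm : ∀ j ≤ m + 1, (CE j).1 ≤ Cm := by
    intro j hj
    exact Finset.single_le_sum (f := fun j => (CE j).1) (fun i _ => (hCE1 i).le)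
      (Finset.mem_range.mpr (by omega))
  set εm : ℝ := (Finset.range (m + 2)).inf' ⟨0, by simp⟩ (fun j => (CE j).2) with hεmdef
  have hεm0 : 0 < εm := by
    rw [hεmdef]
    exact (Finset.lt_inf'_iff _).mpr (fun j _ => hCE2 j)
  have hεm : ∀ j ≤ m + 1, εm ≤ (CE j).2 := by
    intro j hj
    exact Finset.inf'_le _ (Finset.mem_range.mpr (by omega))
  set R : ℝ := 1 + 1 / ε₀ + 1 / εm with hRdef
  have hR1 : 1 ≤ R := by
    have := le_of_lt (div_pos one_pos hε₀)
    have := le_of_lt (div_pos one_pos hεm0)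
    rw [hRdef]; linarith
  obtain ⟨N, hN⟩ : ∃ N : ℕ, ∀ n, N ≤ n → R ≤ σ n := by
    have := (hσtop.eventually_ge_atTop R).exists_forall_of_atTop
    obtain ⟨N, hN⟩ := eventually_atTop.mp (hσtop.eventually_ge_atTop R)
    exact ⟨N, hN⟩
  have hσ0 : ∀ n, 0 ≤ σ n := fun n => (hσdef n) ▸ ENNReal.toReal_nonneg
  -- basic facts for good n
  have hσ1 : ∀ n, N ≤ n → 1 ≤ σ n := fun n hn => le_trans hR1 (hN n hn)
  have hε₀σ : ∀ n, N ≤ n → 1 ≤ ε₀ * σ n := by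
    intro n hn
    rw [← div_le_iff₀' hε₀]
    refine le_trans ?_ (hN n hn)
    have := le_of_lt (div_pos one_pos hεm0)
    rw [hRdef]; linarith
  have hεmσ : ∀ n, N ≤ n → 1 ≤ εm * σ n := by
    intro n hn
    rw [← div_le_iff₀' hεm0]
    refine le_trans ?_ (hN n hn)
    have := le_of_lt (div_pos one_pos hε₀)
    rw [hRdef]; linarith
  -- sets
  set s : Set ℝ := Ioo (-1 : ℝ) 1 with hsdef
  have hsopen : IsOpen s := isOpen_Ioo
  have hsu : UniqueDiffOn ℝ s := hsopen.uniqueDiffOn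
  have hsconv : Convex ℝ s := convex_Ioo _ _
  have h0s : (0 : ℝ) ∈ s := by simp [hsdef]
  have habs : ∀ t ∈ s, |t| ≤ 1 := fun t ht => by
    rw [hsdef, mem_Ioo] at ht; rw [abs_le]; constructor <;> linarith [ht.1, ht.2]
  have hsU : ∀ n, N ≤ n → ∀ t ∈ s, t ∈ Ioo (-(ε₀ * σ n)) (ε₀ * σ n) := by
    intro n hn t ht
    rw [mem_Ioo] at ht ⊢
    have := hε₀σ n hn
    constructor <;> linarith [ht.1, ht.2]
  have hUIcc : ∀ n, Ioo (-(ε₀ * σ n)) (ε₀ * σ n) ⊆ Icc (-(ε₀ * σ n)) (ε₀ * σ n) :=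
    fun n => Ioo_subset_Icc_self
  have hUabs : ∀ n, ∀ t ∈ Ioo (-(ε₀ * σ n)) (ε₀ * σ n), |t| ≤ ε₀ * σ n := by
    intro n t ht
    rw [mem_Ioo] at ht
    rw [abs_le]; constructor <;> linarith [ht.1, ht.2]
  have hIccnhds : ∀ n, N ≤ n → ∀ t ∈ s, Icc (-(ε₀ * σ n)) (ε₀ * σ n) ∈ nhds t := by
    intro n hn t ht
    exact Filter.mem_of_superset (isOpen_Ioo.mem_nhds (hsU n hn t ht)) (hUIcc n)
  have hΛU : ∀ n, ContDiffOn ℝ (m + 1 : ℕ) (Λ n) (Ioo (-(ε₀ * σ n)) (ε₀ * σ n)) :=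
    fun n => (hΛdiff n).mono (hUIcc n)
  -- uniform bounds for iterated derivatives of Λ n on s
  have hA : ∀ n, N ≤ n → ∀ j, 3 ≤ j → j ≤ m + 1 → ∀ t ∈ s,
      ‖iteratedDeriv j (Λ n) t‖ ≤ Cm := by
    intro n hn j hj3 hjm t ht
    have h1 : |t| ≤ (CE j).2 * σ n := by
      refine le_trans (habs t ht) (le_trans (hεmσ n hn) ?_)
      exact mul_le_mul_of_nonneg_right (hεm j hjm) (hσ0 n)
    have h2 := hCE4 j hj3 hjm n t h1
    rw [iterWithin_nhds (hIccnhds n hn t ht) j] at h2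
    refine le_trans h2 (le_trans ?_ (hCm j hjm))
    apply div_le_self (hCE1 j).le
    exact one_le_pow₀ (hσ1 n hn)
  -- derivatives of iterated derivatives
  have hHD : ∀ n, ∀ j < m + 1, ∀ t ∈ Ioo (-(ε₀ * σ n)) (ε₀ * σ n),
      HasDerivAt (iteratedDeriv j (Λ n)) (iteratedDeriv (j + 1) (Λ n) t) t := by
    intro n j hj t ht
    exact hasDerivAt_iteratedDeriv_of_contDiffOn isOpen_Ioo (hΛU n) hj ht
  -- normalized variables
  set X : ℕ → Ω → ℝ := fun n ω => S n ω / σ n with hXdef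
  have hXmeas : ∀ n, AEMeasurable (X n) μ := fun n => (hSmeas n).div_const _
  have hXmem : ∀ n, MemLp (X n) (m + 1 : ℕ) μ := by
    intro n
    have : X n = fun ω => (σ n)⁻¹ * S n ω := by
      funext ω; rw [hXdef]; ring
    rw [this]
    exact (hSm n).const_mul _
  have hXint : ∀ n, ∀ k ≤ m + 1, Integrable (fun ω => |X n ω| ^ k) μ := by
    intro n k hk
    rcases Nat.eq_zero_or_pos k with hk0 | hk0
    · subst hk0; simpa using integrable_const (1 : ℝ)
    have h1 : MemLp (X n) (k : ℕ) μ :=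
      (hXmem n).mono_exponent (by exact_mod_cast Nat.cast_le.mpr hk)
    have h2 := h1.integrable_norm_rpow (by exact_mod_cast hk0.ne') (by simp)
    refine h2.congr ?_
    filter_upwards with ω
    simp [Real.rpow_natCast]
  have hfn : ∀ n, f n = fun t : ℝ => ∫ ω, Complex.exp (Complex.I * t * X n ω) ∂μ := by
    intro n; funext t; rw [hf n t]; simp [hXdef, Complex.ofReal_div]
  have hiter : ∀ n, ∀ k ≤ m + 1, iteratedDeriv k (f n)
      = fun t : ℝ => ∫ ω, (Complex.I * X n ω) ^ k * Complex.exp (Complex.I * t * X n ω) ∂μ := by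
    intro n k hk
    rw [hfn n]
    exact charDeriv (hXmeas n) (hXint n) k hk
  -- moments
  have hEX : ∀ n, ∫ ω, X n ω ∂μ = 0 := by
    intro n
    rw [hXdef]
    simp only []
    rw [integral_div, hmean n, zero_div]
  have hES2 : ∀ n, N ≤ n → ∫ ω, (S n ω) ^ 2 ∂μ = σ n ^ 2 := by
    intro n hn
    have h2 := (hS2 n).eLpNorm_eq_integral_rpow_norm two_ne_zero ENNReal.ofNat_ne_top
    have htr : (2 : ℝ≥0∞).toReal = (2 : ℝ) := by simp
    rw [htr] at h2
    have hnn : 0 ≤ ∫ ω, ‖S n ω‖ ^ (2 : ℝ) ∂μ :=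
      integral_nonneg (fun ω => Real.rpow_nonneg (norm_nonneg _) _)
    have hσ : σ n = (∫ ω, ‖S n ω‖ ^ (2 : ℝ) ∂μ) ^ ((2 : ℝ)⁻¹) := by
      rw [hσdef n, h2, ENNReal.toReal_ofReal (Real.rpow_nonneg hnn _)]
    have heq : ∀ ω : Ω, ‖S n ω‖ ^ (2 : ℝ) = (S n ω) ^ 2 := by
      intro ω
      rw [Real.norm_eq_abs, show (2:ℝ) = ((2:ℕ):ℝ) by norm_num, Real.rpow_natCast, sq_abs]
    have hpw : ((∫ ω, ‖S n ω‖ ^ (2:ℝ) ∂μ) ^ ((2:ℝ)⁻¹)) ^ (2:ℕ)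
        = ∫ ω, ‖S n ω‖ ^ (2:ℝ) ∂μ := by
      rw [← Real.rpow_natCast _ 2, ← Real.rpow_mul hnn]
      norm_num
    rw [hσ, hpw]
    exact (integral_congr_ae (Filter.Eventually.of_forall (fun ω => (heq ω)))).symm
  have hEX2 : ∀ n, N ≤ n → ∫ ω, (X n ω) ^ 2 ∂μ = 1 := by
    intro n hn
    have hσpos : (0 : ℝ) < σ n := lt_of_lt_of_le one_pos (hσ1 n hn)
    have : ∀ ω, (X n ω) ^ 2 = (S n ω) ^ 2 / (σ n) ^ 2 := by
      intro ω; rw [hXdef]; ring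
    rw [integral_congr_ae (Filter.Eventually.of_forall this), integral_div, hES2 n hn,
      div_self (by positivity)]
  have hf0 : ∀ n, f n 0 = 1 := by
    intro n
    rw [hf n 0]
    simp
  have hψ1 : ∀ n, N ≤ n → iteratedDeriv 1 (f n) 0 = 0 := by
    intro n hn
    have h := congrFun (hiter n 1 (by omega)) 0
    rw [h]
    have he : ∀ ω : Ω, (Complex.I * X n ω) ^ 1 * Complex.exp (Complex.I * (0:ℝ) * X n ω)
        = Complex.I * (X n ω : ℂ) := by
      intro ω; simp
    rw [integral_congr_ae (Filter.Eventually.of_forall he), integral_const_mul]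
    have hIR : (∫ ω, ((X n ω : ℝ) : ℂ) ∂μ) = ((0:ℝ) : ℂ) := by
      rw [← hEX n]; exact integral_ofReal
    rw [hIR]
    simp
  have hψ2v : ∀ n, N ≤ n → iteratedDeriv 2 (f n) 0 = -1 := by
    intro n hn
    have h := congrFun (hiter n 2 (by omega)) 0
    rw [h]
    have he : ∀ ω : Ω, (Complex.I * X n ω) ^ 2 * Complex.exp (Complex.I * (0:ℝ) * X n ω)
        = -(((X n ω ^ 2 : ℝ)) : ℂ) := by
      intro ω
      push_cast
      simp [mul_pow, Complex.I_sq]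
    rw [integral_congr_ae (Filter.Eventually.of_forall he), integral_neg]
    have hIR : (∫ ω, ((X n ω ^ 2 : ℝ) : ℂ) ∂μ) = ((1:ℝ) : ℂ) := by
      rw [← hEX2 n hn]; exact integral_ofReal
    rw [hIR]
    norm_num
  have hψq : ∀ n, N ≤ n → (∫ ω, (X n ω) ^ q ∂μ) ≤ ‖iteratedDeriv q (f n) 0‖ := by
    intro n hn
    have h := congrFun (hiter n q (by omega)) 0
    rw [h]
    have he : ∀ ω : Ω, (Complex.I * X n ω) ^ q * Complex.exp (Complex.I * (0:ℝ) * X n ω)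
        = Complex.I ^ q * (((X n ω ^ q : ℝ)) : ℂ) := by
      intro ω
      simp [mul_pow]
    rw [integral_congr_ae (Filter.Eventually.of_forall he), integral_const_mul]
    have hIR : (∫ ω, ((X n ω ^ q : ℝ) : ℂ) ∂μ) = (((∫ ω, X n ω ^ q ∂μ : ℝ)) : ℂ) :=
      integral_ofReal
    rw [hIR, norm_mul, norm_pow, Complex.norm_I, one_pow, one_mul, Complex.norm_real]
    exact le_abs_self _
  -- derivative of f on the interior interval
  have hfd : ∀ n, N ≤ n → ∀ t ∈ Ioo (-(ε₀ * σ n)) (ε₀ * σ n),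
      HasDerivAt (f n) ((iteratedDeriv 1 (Λ n) t - t) * f n t) t := by
    intro n hn t ht
    have hL : HasDerivAt (Λ n) (iteratedDeriv 1 (Λ n) t) t := by
      have := hHD n 0 (by omega) t ht
      rwa [iteratedDeriv_zero] at this
    have h0 : HasDerivAt (fun u : ℝ => (u : ℂ)) 1 t := by
      simpa using (hasDerivAt_id t).ofReal_comp
    have hsq : HasDerivAt (fun u : ℝ => ((u : ℂ)) ^ 2 / 2) (t : ℂ) t := by
      have hrw : (fun u : ℝ => ((u : ℂ)) ^ 2 / 2) = fun u : ℝ => ((u : ℂ) * (u : ℂ)) / 2 := by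
        funext u; ring
      rw [hrw]
      convert (h0.fun_mul h0).div_const 2 using 1
      · rfl
      ring
    have hexp := (hL.fun_sub hsq).cexp
    have hev : f n =ᶠ[nhds t] fun u : ℝ => Complex.exp (Λ n u - (u : ℂ) ^ 2 / 2) := by
      filter_upwards [isOpen_Ioo.mem_nhds ht] with y hy
      exact hΛf n y (hUabs n y hy)
    have := hexp.congr_of_eventuallyEq hev
    rw [← hΛf n t (hUabs n t ht)] at this
    convert this using 1
    · rfl
    ring
  have h0U : ∀ n, N ≤ n → (0 : ℝ) ∈ Ioo (-(ε₀ * σ n)) (ε₀ * σ n) := by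
    intro n hn
    have := hε₀σ n hn
    rw [Set.mem_Ioo]
    constructor <;> linarith
  have hA10 : ∀ n, N ≤ n → iteratedDeriv 1 (Λ n) 0 = 0 := by
    intro n hn
    have hd := (hfd n hn 0 (h0U n hn)).deriv
    have h1 := hψ1 n hn
    rw [iteratedDeriv_one] at h1
    rw [hd, hf0 n] at h1
    simpa using h1
  have hA20 : ∀ n, N ≤ n → iteratedDeriv 2 (Λ n) 0 = 0 := by
    intro n hn
    have h0 : HasDerivAt (fun u : ℝ => (u : ℂ)) 1 0 := by
      simpa using (hasDerivAt_id (0:ℝ)).ofReal_comp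
    have ha : HasDerivAt (fun u : ℝ => iteratedDeriv 1 (Λ n) u - (u : ℂ))
        (iteratedDeriv 2 (Λ n) 0 - 1) 0 := by
      exact (hHD n 1 (by omega) 0 (h0U n hn)).sub h0
    have hb := hfd n hn 0 (h0U n hn)
    have hmul := ha.fun_mul hb
    have hev2 : deriv (f n) =ᶠ[nhds (0:ℝ)]
        fun u : ℝ => (iteratedDeriv 1 (Λ n) u - u) * f n u := by
      filter_upwards [isOpen_Ioo.mem_nhds (h0U n hn)] with y hy
      exact (hfd n hn y hy).deriv
    have h2 : iteratedDeriv 2 (f n) 0 = deriv (deriv (f n)) 0 := by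
      rw [iteratedDeriv_succ, iteratedDeriv_one]
    have h3 := hψ2v n hn
    rw [h2, hev2.deriv_eq, hmul.deriv] at h3
    rw [hA10 n hn, hf0 n] at h3
    have : iteratedDeriv 2 (Λ n) 0 - 1 = -1 := by
      simpa using h3
    linear_combination this
  have hA2b : ∀ n, N ≤ n → ∀ t ∈ s, ‖iteratedDeriv 2 (Λ n) t‖ ≤ Cm := by
    intro n hn t ht
    have hmvt := Convex.norm_image_sub_le_of_norm_hasDerivWithin_le
      (f := iteratedDeriv 2 (Λ n)) (f' := fun x => iteratedDeriv 3 (Λ n) x) (s := s) (C := Cm)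
      (fun x hx => (hHD n 2 (by omega) x (hsU n hn x hx)).hasDerivWithinAt)
      (fun x hx => hA n hn 3 le_rfl (by omega) x hx) hsconv h0s ht
    rw [hA20 n hn, sub_zero] at hmvt
    refine le_trans hmvt ?_
    have : ‖t - 0‖ ≤ 1 := by rw [sub_zero, Real.norm_eq_abs]; exact habs t ht
    calc Cm * ‖t - 0‖ ≤ Cm * 1 := by
          exact mul_le_mul_of_nonneg_left this hCm0.le
      _ = Cm := mul_one Cm
  have hA1b : ∀ n, N ≤ n → ∀ t ∈ s, ‖iteratedDeriv 1 (Λ n) t‖ ≤ Cm := by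
    intro n hn t ht
    have hmvt := Convex.norm_image_sub_le_of_norm_hasDerivWithin_le
      (f := iteratedDeriv 1 (Λ n)) (f' := fun x => iteratedDeriv 2 (Λ n) x) (s := s) (C := Cm)
      (fun x hx => (hHD n 1 (by omega) x (hsU n hn x hx)).hasDerivWithinAt)
      (fun x hx => hA2b n hn x hx) hsconv h0s ht
    rw [hA10 n hn, sub_zero] at hmvt
    refine le_trans hmvt ?_
    have : ‖t - 0‖ ≤ 1 := by rw [sub_zero, Real.norm_eq_abs]; exact habs t ht
    calc Cm * ‖t - 0‖ ≤ Cm * 1 := mul_le_mul_of_nonneg_left this hCm0.le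
      _ = Cm := mul_one Cm
  -- the logarithmic derivative g
  set g : ℕ → ℝ → ℂ := fun n t => iteratedDeriv 1 (Λ n) t - t with hgdef
  have hgiter : ∀ n, N ≤ n → ∀ k, k ≤ m → ∀ t ∈ Ioo (-(ε₀ * σ n)) (ε₀ * σ n),
      iteratedDeriv k (g n) t = iteratedDeriv (k + 1) (Λ n) t
        - (if k = 0 then (t : ℂ) else if k = 1 then 1 else 0) := by
    intro n hn k
    induction k with
    | zero =>
      intro _ t ht
      simp [hgdef]
    | succ k IH =>
      intro hk t ht
      rw [iteratedDeriv_succ]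
      have ev : iteratedDeriv k (g n) =ᶠ[nhds t] fun u : ℝ =>
          iteratedDeriv (k + 1) (Λ n) u - (if k = 0 then (u : ℂ) else if k = 1 then 1 else 0) := by
        filter_upwards [isOpen_Ioo.mem_nhds ht] with y hy
        exact IH (by omega) y hy
      rw [ev.deriv_eq]
      have hc : HasDerivAt (fun u : ℝ => (if k = 0 then (u : ℂ) else if k = 1 then (1:ℂ) else 0))
          (if k = 0 then (1:ℂ) else 0) t := by
        rcases Nat.eq_zero_or_pos k with hk0 | hk0
        · subst hk0
          simp only [if_pos rfl]
          simpa using (hasDerivAt_id t).ofReal_comp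
        · rcases Nat.lt_or_ge k 2 with hk1 | hk2
          · have : k = 1 := by omega
            subst this
            simpa using hasDerivAt_const t (1:ℂ)
          · have h1 : k ≠ 0 := by omega
            have h2 : k ≠ 1 := by omega
            simp only [if_neg h1, if_neg h2]
            simpa [h1] using hasDerivAt_const t (0:ℂ)
      have := ((hHD n (k + 1) (by omega) t ht).fun_sub hc).deriv
      rw [this]
      congr 1
      rcases Nat.eq_zero_or_pos k with hk0 | hk0
      · subst hk0; simp
      · have h1 : k ≠ 0 := by omega
        have h2 : k + 1 ≠ 0 := by omega
        simp only [if_neg h1, if_neg h2]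
        by_cases h3 : k = 1
        · subst h3; simp
        · simp [h1, h3, show k + 1 ≠ 1 by omega]
  have hgbound : ∀ n, N ≤ n → ∀ k, k < q → ∀ t ∈ s,
      ‖iteratedDerivWithin k (g n) s t‖ ≤ Cm + 1 := by
    intro n hn k hk t ht
    rw [iterWithin_open hsopen ht k,
      hgiter n hn k (by omega) t (hsU n hn t ht)]
    rcases Nat.eq_zero_or_pos k with hk0 | hk0
    · subst hk0
      simp only [if_pos rfl]
      refine le_trans (norm_sub_le _ _) ?_
      have h1 := hA1b n hn t ht
      have h2 : ‖(t:ℂ)‖ ≤ 1 := by rw [Complex.norm_real, Real.norm_eq_abs]; exact habs t ht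
      simpa using add_le_add h1 h2
    · by_cases h3 : k = 1
      · subst h3
        simp only [if_neg one_ne_zero, if_pos rfl]
        refine le_trans (norm_sub_le _ _) ?_
        have h1 := hA2b n hn t ht
        simpa using add_le_add h1 (le_refl (1:ℝ))
      · have h1 : k ≠ 0 := by omega
        simp only [if_neg h1, if_neg h3, sub_zero]
        refine le_trans (hA n hn (k + 1) (by omega) (by omega) t ht) ?_
        linarith
  -- smoothness of f and g on s
  have hsSub : ∀ n, N ≤ n → s ⊆ Icc (-(ε₀ * σ n)) (ε₀ * σ n) := by
    intro n hn t ht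
    exact hUIcc n (hsU n hn t ht)
  have hpoly : ContDiff ℝ ((m + 1 : ℕ) : ℕ∞) (fun t : ℝ => ((t : ℂ)) ^ 2 / 2) := by
    have h1 : ContDiff ℝ ((m + 1 : ℕ) : ℕ∞) (fun t : ℝ => (t : ℂ)) :=
      Complex.ofRealCLM.contDiff
    have h2 : (fun t : ℝ => ((t : ℂ)) ^ 2 / 2) = fun t : ℝ => ((t : ℂ) * (t : ℂ)) / 2 := by
      funext t; ring
    rw [h2]
    exact (h1.mul h1).div_const 2
  have hordle : ((q - 1 : ℕ) : WithTop ℕ∞) ≤ ((m + 1 : ℕ) : ℕ∞) := by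
    have h : (q - 1 : ℕ) ≤ (m + 1 : ℕ) := by omega
    exact Nat.cast_le.mpr h
  have hFs : ∀ n, N ≤ n → ContDiffOn ℝ ((q - 1 : ℕ) : ℕ∞) (f n) s := by
    intro n hn
    have hG : ContDiffOn ℝ ((m + 1 : ℕ) : ℕ∞) (fun t : ℝ => Λ n t - (t : ℂ) ^ 2 / 2) s :=
      ((hΛdiff n).mono (hsSub n hn)).sub hpoly.contDiffOn
    have hexpG : ContDiffOn ℝ ((m + 1 : ℕ) : ℕ∞)
        (fun t : ℝ => Complex.exp (Λ n t - (t : ℂ) ^ 2 / 2)) s :=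
      Complex.contDiff_exp.comp_contDiffOn hG
    refine (hexpG.congr ?_).of_le hordle
    intro t ht
    exact hΛf n t (hUabs n t (hsU n hn t ht))
  have hgs : ∀ n, N ≤ n → ContDiffOn ℝ ((q - 1 : ℕ) : ℕ∞) (g n) s := by
    intro n hn
    have hdΛ : ContDiffOn ℝ ((m : ℕ) : ℕ∞) (deriv (Λ n)) (Ioo (-(ε₀ * σ n)) (ε₀ * σ n)) := by
      refine (hΛU n).deriv_of_isOpen isOpen_Ioo ?_
      exact_mod_cast le_refl (m + 1 : ℕ)
    have hgeq : g n = fun t : ℝ => deriv (Λ n) t - (t : ℂ) := by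
      funext t
      rw [hgdef]
      simp [iteratedDeriv_one]
    rw [hgeq]
    have hid : ContDiffOn ℝ ((m : ℕ) : ℕ∞) (fun t : ℝ => (t : ℂ)) s :=
      (Complex.ofRealCLM.contDiff).contDiffOn
    refine (((hdΛ.mono ?_).sub hid).of_le ?_)
    · exact fun t ht => hsU n hn t ht
    · exact Nat.cast_le.mpr (by omega : (q - 1 : ℕ) ≤ m)
  have hFd : ∀ n, N ≤ n → ∀ t ∈ s, derivWithin (f n) s t = g n t * f n t := by
    intro n hn t ht
    rw [derivWithin_of_isOpen hsopen ht, (hfd n hn t (hsU n hn t ht)).deriv]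
  have hF0 : ∀ n, ∀ t : ℝ, ‖f n t‖ ≤ 1 := by
    intro n t
    rw [hf n t]
    have := norm_integral_le_of_norm_le_const (μ := μ) (C := 1)
      (f := fun ω => Complex.exp (Complex.I * t * (S n ω / σ n))) ?_
    · simpa using this
    · filter_upwards with ω
      have : (Complex.I * t * ((S n ω : ℂ) / σ n)).re = 0 := by simp
      rw [Complex.norm_exp, this]
      simp
  obtain ⟨M, hM0, hM⟩ := chain_bound (P := fun n => N ≤ n) hsu
    (q := q) (D := Cm + 1) (by linarith) hFs hgs hFd
    (fun i hi t ht => hF0 i t) hgbound q le_rfl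
  have hkey : ∀ n, N ≤ n → ∫ ω, (X n ω) ^ q ∂μ ≤ M := by
    intro n hn
    refine le_trans (hψq n hn) ?_
    rw [← iterWithin_open hsopen h0s q]
    exact hM q le_rfl n hn 0 h0s
  -- convert the moment bound into an eLpNorm bound
  have hq0R : (0:ℝ) < (q : ℝ) := by
    have : 0 < q := by omega
    exact_mod_cast this
  have hgood : ∀ n, N ≤ n →
      (eLpNorm (S n) (ENNReal.ofReal p) μ).toReal ≤ M ^ ((q:ℝ)⁻¹) * σ n := by
    intro n hn
    have hσpos : (0:ℝ) < σ n := lt_of_lt_of_le one_pos (hσ1 n hn)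
    have hXq : ∫ ω, |X n ω| ^ q ∂μ ≤ M := by
      refine le_trans (le_of_eq (integral_congr_ae (Filter.Eventually.of_forall ?_))) (hkey n hn)
      intro ω
      exact hq_even.pow_abs (X n ω)
    have hInt : ∫ ω, ‖S n ω‖ ^ (q:ℝ) ∂μ ≤ M * σ n ^ q := by
      have heq : ∀ ω : Ω, ‖S n ω‖ ^ (q:ℝ) = σ n ^ q * |X n ω| ^ q := by
        intro ω
        rw [Real.rpow_natCast, Real.norm_eq_abs]
        have h1 : |S n ω| = σ n * |X n ω| := by
          rw [hXdef]
          simp only []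
          rw [abs_div, abs_of_pos hσpos]
          field_simp
        rw [h1, mul_pow]
      rw [integral_congr_ae (Filter.Eventually.of_forall heq), integral_const_mul]
      rw [mul_comm M _]
      exact mul_le_mul_of_nonneg_left hXq (by positivity)
    have hmem : MemLp (S n) ((q : ℕ) : ℝ≥0∞) μ :=
      (hSm n).mono_exponent (Nat.cast_le.mpr hqm1)
    have heLp := hmem.eLpNorm_eq_integral_rpow_norm
      (by exact_mod_cast (by omega : q ≠ 0)) (by simp)
    have htr : (((q : ℕ) : ℝ≥0∞)).toReal = (q : ℝ) := by simp
    rw [htr] at heLp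
    have hnn : 0 ≤ ∫ ω, ‖S n ω‖ ^ (q:ℝ) ∂μ :=
      integral_nonneg (fun ω => Real.rpow_nonneg (norm_nonneg _) _)
    have hσq : ((σ n ^ q : ℝ)) ^ ((q:ℝ)⁻¹) = σ n := by
      rw [← Real.rpow_natCast (σ n) q, ← Real.rpow_mul (hσ0 n),
        mul_inv_cancel₀ (ne_of_gt hq0R), Real.rpow_one]
    have hchain : eLpNorm (S n) ((q : ℕ) : ℝ≥0∞) μ
        ≤ ENNReal.ofReal (M ^ ((q:ℝ)⁻¹) * σ n) := by
      rw [heLp]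
      refine ENNReal.ofReal_le_ofReal ?_
      have h2 : (∫ ω, ‖S n ω‖ ^ (q:ℝ) ∂μ) ^ ((q:ℝ)⁻¹) ≤ (M * σ n ^ q) ^ ((q:ℝ)⁻¹) :=
        Real.rpow_le_rpow hnn hInt (by positivity)
      refine le_trans h2 ?_
      rw [Real.mul_rpow hM0 (by positivity), hσq]
    have hexp : ENNReal.ofReal p ≤ ((q : ℕ) : ℝ≥0∞) := by
      have h1 : ENNReal.ofReal p ≤ ENNReal.ofReal ((q : ℕ) : ℝ) := by
        refine ENNReal.ofReal_le_ofReal ?_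
        refine le_trans hpm ?_
        exact_mod_cast hmq
      refine le_trans h1 ?_
      rw [ENNReal.ofReal_natCast]
    have hmono : eLpNorm (S n) (ENNReal.ofReal p) μ ≤ ENNReal.ofReal (M ^ ((q:ℝ)⁻¹) * σ n) :=
      le_trans (eLpNorm_le_eLpNorm_of_exponent_le hexp (hSmeas n).aestronglyMeasurable) hchain
    have := ENNReal.toReal_mono ENNReal.ofReal_ne_top hmono
    refine le_trans this ?_
    rw [ENNReal.toReal_ofReal (by positivity)]
  -- assemble the constant
  set cc : ℕ → ℝ := fun k =>
    if σ k = 0 then 0 else (eLpNorm (S k) (ENNReal.ofReal p) μ).toReal / σ k with hccdef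
  have hcc0 : ∀ k, 0 ≤ cc k := by
    intro k
    rw [hccdef]
    by_cases h : σ k = 0
    · simp [h]
    · simp only [if_neg h]
      exact div_nonneg ENNReal.toReal_nonneg (hσ0 k)
  have hsum0 : 0 ≤ ∑ k ∈ Finset.range N, cc k := Finset.sum_nonneg (fun k _ => hcc0 k)
  have hMq0 : 0 ≤ M ^ ((q:ℝ)⁻¹) := Real.rpow_nonneg hM0 _
  refine ⟨M ^ ((q:ℝ)⁻¹) + ∑ k ∈ Finset.range N, cc k, fun n => ?_⟩
  by_cases hn : N ≤ n
  · refine le_trans (hgood n hn) ?_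
    exact mul_le_mul_of_nonneg_right (le_add_of_nonneg_right hsum0) (hσ0 n)
  · push_neg at hn
    by_cases h0 : σ n = 0
    · have hne : eLpNorm (S n) 2 μ ≠ ⊤ := (hS2 n).2.ne
      have hz : eLpNorm (S n) 2 μ = 0 := by
        have := (hσdef n).symm.trans h0
        rcases ENNReal.toReal_eq_zero_iff _ |>.mp this with h | h
        · exact h
        · exact absurd h hne
      have hae : S n =ᵐ[μ] 0 := (eLpNorm_eq_zero_iff (hS2 n).1 two_ne_zero).mp hz
      have : eLpNorm (S n) (ENNReal.ofReal p) μ = 0 := by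
        rw [eLpNorm_congr_ae hae]
        exact eLpNorm_zero
      rw [this, h0]
      simp
    · have hσpos : 0 < σ n := lt_of_le_of_ne (hσ0 n) (Ne.symm h0)
      have hccn : (eLpNorm (S n) (ENNReal.ofReal p) μ).toReal = cc n * σ n := by
        rw [hccdef]
        simp only [if_neg h0]
        rw [div_mul_cancel₀ _ h0]
      rw [hccn]
      refine mul_le_mul_of_nonneg_right ?_ (hσ0 n)
      refine le_trans ?_ (le_add_of_nonneg_left hMq0)
      exact Finset.single_le_sum (f := cc) (fun k _ => hcc0 k) (Finset.mem_range.mpr hn)
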